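/- In the time-invariant parameterization, assume there are constants 0 < b ≤ B such that b ≤ Λ*_t(y) ≤ B for every t and every y with p(y) > 0, and that there is a nonempty compact convex set Θ_ψ ⊂ ℝ^{N'} containing a point ψ* with Λ*_t(y) = Λ_t(ψ*;y) for all 1 ≤ t ≤ N and all y, such that b ≤ Λ_t(ψ;y) ≤ B for every ψ ∈ Θ_ψ, every 1 ≤ t ≤ N, and every y. Then the vector field G_s(ψ) = E[Σ_{t=1}^{N} (φ(h·Λ_t(ψ;y)) − y_t)·ξ_t(y)] is κ_s-strongly monotone on Θ_ψ: for all ψ, ψ̃ ∈ Θ_ψ, ⟨G_s(ψ) − G_s(ψ̃), ψ − ψ̃⟩ ≥ κ_s·‖ψ − ψ̃‖₂², where κ_s = e^{−h·b}·b·T·h·e^{−B·τ_max}. -/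

import Mathlib

open Finset
open scoped BigOperators RealInnerProductSpace

noncomputable section

/-- Real value of a Boolean: `1` if `true`, `0` if `false`. -/
def bval (b : Bool) : ℝ := if b then 1 else 0

/-- The time window of indices `-N'+1, …, N`. -/
def window (N N' : ℕ) : Finset ℤ := Finset.Icc (-(N' : ℤ) + 1) (N : ℤ)

/-- The probability mass function of the discrete-time Bernoulli process with
true conditional intensities `Λ`. -/
def seqPMF (N N' : ℕ) (h : ℝ) (Λ : ℤ → (ℤ → Bool) → ℝ) (y : ℤ → Bool) : ℝ :=
  ∏ t ∈ window N N',
    ((1 - bval (y t)) * Real.exp (-(h * Λ t y))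
      + bval (y t) * (1 - Real.exp (-(h * Λ t y))))

/-- Extension of a window-indexed binary sequence to all of `ℤ` (by `false`). -/
def extSeq (N N' : ℕ) (w : ↥(window N N') → Bool) : ℤ → Bool :=
  fun i => if hi : i ∈ window N N' then w ⟨i, hi⟩ else false

/-- Expectation with respect to the law of the process. -/
def expect (N N' : ℕ) (h : ℝ) (Λ : ℤ → (ℤ → Bool) → ℝ) (f : (ℤ → Bool) → ℝ) : ℝ :=
  ∑ w : ↥(window N N') → Bool, seqPMF N N' h Λ (extSeq N N' w) * f (extSeq N N' w)

/-- The link function `φ(x) = 1 - e^{-x}`. -/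
def phi (x : ℝ) : ℝ := 1 - Real.exp (-x)

/-- Expectation of a vector-valued statistic with respect to the law of the process. -/
def expectVec {E : Type*} [AddCommMonoid E] [Module ℝ E]
    (N N' : ℕ) (h : ℝ) (Λ : ℤ → (ℤ → Bool) → ℝ) (f : (ℤ → Bool) → E) : E :=
  ∑ w : ↥(window N N') → Bool, seqPMF N N' h Λ (extSeq N N' w) • f (extSeq N N' w)

/-- The history vector `ξ_t(y) ∈ ℝ^{N'}` with `l`-th entry `y_{t-l}`,
`l = 1, …, N'` (here the index `l : Fin N'` represents `l+1`). -/
def xi (N' : ℕ) (t : ℤ) (y : ℤ → Bool) : EuclideanSpace ℝ (Fin N') :=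
  WithLp.toLp 2 (fun l : Fin N' => bval (y (t - ((l : ℕ) + 1 : ℕ))))

/-- The time-invariant model intensity
`Λ_t(ψ; y) = μ + ∑_{l=1}^{N'} ψ_l y_{t-l} = μ + ⟨ξ_t(y), ψ⟩`. -/
def statIntensity (N' : ℕ) (μ : ℝ) (ψ : EuclideanSpace ℝ (Fin N')) (t : ℤ)
    (y : ℤ → Bool) : ℝ :=
  μ + ∑ l : Fin N', xi N' t y l * ψ l

-- auxiliary: the per-time factor of the pmf
def qfac (h : ℝ) (Λ : ℤ → (ℤ → Bool) → ℝ) (t : ℤ) (y : ℤ → Bool) : ℝ :=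
  (1 - bval (y t)) * Real.exp (-(h * Λ t y)) + bval (y t) * (1 - Real.exp (-(h * Λ t y)))

lemma seqPMF_eq (N N' : ℕ) (h : ℝ) (Λ : ℤ → (ℤ → Bool) → ℝ) (y : ℤ → Bool) :
    seqPMF N N' h Λ y = ∏ t ∈ window N N', qfac h Λ t y := rfl

lemma qfac_true {h : ℝ} {Λ : ℤ → (ℤ → Bool) → ℝ} {t : ℤ} {y : ℤ → Bool}
    (hy : y t = true) : qfac h Λ t y = 1 - Real.exp (-(h * Λ t y)) := by
  simp [qfac, hy, bval]

lemma qfac_false {h : ℝ} {Λ : ℤ → (ℤ → Bool) → ℝ} {t : ℤ} {y : ℤ → Bool}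
    (hy : y t = false) : qfac h Λ t y = Real.exp (-(h * Λ t y)) := by
  simp [qfac, hy, bval]

lemma window_card (N N' : ℕ) : (window N N').card = N + N' := by
  rw [window, Int.card_Icc]; omega

lemma extSeq_mem (N N' : ℕ) (w : ↥(window N N') → Bool) {i : ℤ} (hi : i ∈ window N N') :
    extSeq N N' w i = w ⟨i, hi⟩ := by simp [extSeq, hi]

lemma lam_bounds (N N' : ℕ) (h : ℝ) (hh : 0 < h) (Λ : ℤ → (ℤ → Bool) → ℝ)
    (hdep : ∀ (t : ℤ) (y y' : ℤ → Bool),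
      (∀ i ∈ window N N', i < t → y i = y' i) → Λ t y = Λ t y')
    (b B : ℝ) (hb : 0 < b)
    (hstar : ∀ t ∈ window N N', ∀ y : ℤ → Bool,
      0 < seqPMF N N' h Λ y → b ≤ Λ t y ∧ Λ t y ≤ B) :
    ∀ (s : ℤ), s ∈ window N N' → ∀ w : (↥(window N N') → Bool),
      b ≤ Λ s (extSeq N N' w) ∧ Λ s (extSeq N N' w) ≤ B := by
  suffices H : ∀ (n : ℕ) (s : ℤ), s ∈ window N N' → (s + N' - 1).toNat ≤ n →
      ∀ w : (↥(window N N') → Bool),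
        b ≤ Λ s (extSeq N N' w) ∧ Λ s (extSeq N N' w) ≤ B by
    intro s hs w; exact H _ s hs le_rfl w
  intro n
  induction n using Nat.strong_induction_on with
  | _ n ih =>
    intro s hs hsn w
    have hsw := Finset.mem_Icc.mp hs
    let w0 : ↥(window N N') → Bool := fun j => if (j : ℤ) < s then w j else false
    have hib : ∀ u : ℤ, u ∈ window N N' → u < s →
        b ≤ Λ u (extSeq N N' w0) ∧ Λ u (extSeq N N' w0) ≤ B := by
      intro u hu hus
      have hu' := Finset.mem_Icc.mp hu
      have h1 : (u + N' - 1).toNat < n := by omega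
      exact ih _ h1 u hu le_rfl w0
    have hpos : 0 < seqPMF N N' h Λ (extSeq N N' w0) := by
      rw [seqPMF_eq]
      apply Finset.prod_pos
      intro u hu
      cases hval : extSeq N N' w0 u with
      | false => rw [qfac_false hval]; exact Real.exp_pos _
      | true =>
        rw [qfac_true hval]
        have hus : u < s := by
          by_contra hcon
          push_neg at hcon
          have hfalse : extSeq N N' w0 u = false := by
            rw [extSeq_mem N N' w0 hu]
            show (if (u : ℤ) < s then w ⟨u, hu⟩ else false) = false
            rw [if_neg (not_lt.mpr hcon)]
          exact Bool.noConfusion (hfalse.symm.trans hval)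
        have hΛ := (hib u hu hus).1
        have h1 : 0 < h * Λ u (extSeq N N' w0) := mul_pos hh (lt_of_lt_of_le hb hΛ)
        have h2 : Real.exp (-(h * Λ u (extSeq N N' w0))) < 1 := by
          rw [← Real.exp_zero]
          exact Real.exp_lt_exp.mpr (by linarith)
        linarith
    have heq : Λ s (extSeq N N' w0) = Λ s (extSeq N N' w) := by
      apply hdep
      intro i hi his
      rw [extSeq_mem N N' w0 hi, extSeq_mem N N' w hi]
      show (if (i : ℤ) < s then w ⟨i, hi⟩ else false) = w ⟨i, hi⟩
      rw [if_pos his]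
    have := hstar s hs _ hpos
    rw [heq] at this
    exact this

lemma telescope (N N' : ℕ) (r : ℤ → (ℤ → Bool) → ℝ)
    (h1 : ∀ s ∈ window N N', ∀ y y' : ℤ → Bool,
      (∀ i ∈ window N N', i ≤ s → y i = y' i) → r s y = r s y')
    (h2 : ∀ s ∈ window N N', ∀ y y' : ℤ → Bool,
      (∀ i : ℤ, i ≠ s → y i = y' i) → y s = true → y' s = false → r s y + r s y' = 1) :
    ∀ k : ℕ, k ≤ N + N' →
      ∑ w : ↥(window N N') → Bool,
        ∏ s ∈ Finset.Icc (-(N' : ℤ) + 1) (-(N' : ℤ) + k), r s (extSeq N N' w)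
        = 2 ^ (N + N' - k) := by
  intro k
  induction k with
  | zero =>
    intro _
    have hempty : Finset.Icc (-(N' : ℤ) + 1) (-(N' : ℤ) + (0 : ℕ)) = ∅ :=
      Finset.Icc_eq_empty (by omega)
    simp only [hempty, Finset.prod_empty]
    rw [Finset.sum_const, Finset.card_univ, nsmul_eq_mul, mul_one, Fintype.card_fun,
      Fintype.card_coe, window_card, Fintype.card_bool]
    norm_num
  | succ k ih =>
    intro hk
    have hk' : k ≤ N + N' := Nat.le_of_succ_le hk
    have hmw : (-(N' : ℤ) + (k + 1 : ℕ)) ∈ window N N' := by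
      simp only [window, Finset.mem_Icc]; push_cast; omega
    have hmnot : (-(N' : ℤ) + (k + 1 : ℕ)) ∉ Finset.Icc (-(N' : ℤ) + 1) (-(N' : ℤ) + (k : ℕ)) := by
      simp only [Finset.mem_Icc]; push_cast; omega
    have hsplit : Finset.Icc (-(N' : ℤ) + 1) (-(N' : ℤ) + (k + 1 : ℕ))
        = insert (-(N' : ℤ) + (k + 1 : ℕ)) (Finset.Icc (-(N' : ℤ) + 1) (-(N' : ℤ) + (k : ℕ))) := by
      ext i
      simp only [Finset.mem_Icc, Finset.mem_insert]
      push_cast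
      omega
    set m : ℤ := -(N' : ℤ) + (k + 1 : ℕ) with hm
    let fl : (↥(window N N') → Bool) → (↥(window N N') → Bool) :=
      fun w j => if (j : ℤ) = m then !(w j) else w j
    have hfl2 : Function.Involutive fl := by
      intro w; funext j
      by_cases hj : (j : ℤ) = m <;> simp [fl, hj]
    have hext_ne : ∀ w (i : ℤ), i ≠ m → extSeq N N' (fl w) i = extSeq N N' w i := by
      intro w i hi
      by_cases hiw : i ∈ window N N'
      · rw [extSeq_mem N N' _ hiw, extSeq_mem N N' w hiw]
        simp only [fl, if_neg (show ¬ ((⟨i, hiw⟩ : ↥(window N N')) : ℤ) = m from hi)]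
      · simp [extSeq, hiw]
    have hext_m : ∀ w, extSeq N N' (fl w) m = !(extSeq N N' w m) := by
      intro w
      rw [extSeq_mem N N' _ hmw, extSeq_mem N N' w hmw]
      simp [fl]
    have key : ∀ w, (∏ s ∈ Finset.Icc (-(N' : ℤ) + 1) m, r s (extSeq N N' w))
        + (∏ s ∈ Finset.Icc (-(N' : ℤ) + 1) m, r s (extSeq N N' (fl w)))
        = ∏ s ∈ Finset.Icc (-(N' : ℤ) + 1) (-(N' : ℤ) + (k : ℕ)), r s (extSeq N N' w) := by
      intro w
      rw [hsplit, Finset.prod_insert hmnot, Finset.prod_insert hmnot]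
      have hlow : ∀ u ∈ Finset.Icc (-(N' : ℤ) + 1) (-(N' : ℤ) + (k : ℕ)),
          r u (extSeq N N' (fl w)) = r u (extSeq N N' w) := by
        intro u hu
        have hu' := Finset.mem_Icc.mp hu
        have huw : u ∈ window N N' := by
          simp only [window, Finset.mem_Icc]; constructor
          · exact hu'.1
          · have : (k : ℤ) + 1 ≤ (N : ℤ) + N' := by exact_mod_cast hk
            omega
        apply h1 u huw
        intro i _ hiu
        apply hext_ne
        intro hcon
        rw [hcon] at hiu
        have : (-(N' : ℤ) + (k + 1 : ℕ)) ≤ -(N' : ℤ) + (k : ℕ) := le_trans hiu hu'.2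
        push_cast at this; omega
      rw [Finset.prod_congr rfl hlow]
      have hsum1 : r m (extSeq N N' w) + r m (extSeq N N' (fl w)) = 1 := by
        cases hbm : extSeq N N' w m with
        | true =>
          exact h2 m hmw _ _ (fun i hi => (hext_ne w i hi).symm) hbm
            (by rw [hext_m, hbm]; rfl)
        | false =>
          rw [add_comm]
          exact h2 m hmw _ _ (fun i hi => hext_ne w i hi)
            (by rw [hext_m, hbm]; rfl) hbm
      calc r m (extSeq N N' w) * ∏ s ∈ Finset.Icc (-(N' : ℤ) + 1) (-(N' : ℤ) + (k : ℕ)), r s (extSeq N N' w)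
          + r m (extSeq N N' (fl w)) * ∏ s ∈ Finset.Icc (-(N' : ℤ) + 1) (-(N' : ℤ) + (k : ℕ)), r s (extSeq N N' w)
          = (r m (extSeq N N' w) + r m (extSeq N N' (fl w)))
            * ∏ s ∈ Finset.Icc (-(N' : ℤ) + 1) (-(N' : ℤ) + (k : ℕ)), r s (extSeq N N' w) := by ring
        _ = _ := by rw [hsum1, one_mul]
    have hsum_flip : ∑ w : ↥(window N N') → Bool,
          (∏ s ∈ Finset.Icc (-(N' : ℤ) + 1) m, r s (extSeq N N' (fl w)))
        = ∑ w : ↥(window N N') → Bool, ∏ s ∈ Finset.Icc (-(N' : ℤ) + 1) m, r s (extSeq N N' w) :=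
      Fintype.sum_bijective fl hfl2.bijective _ _ (fun w => rfl)
    have h2S : 2 * (∑ w : ↥(window N N') → Bool,
          ∏ s ∈ Finset.Icc (-(N' : ℤ) + 1) m, r s (extSeq N N' w)) = 2 ^ (N + N' - k) := by
      rw [two_mul]
      nth_rewrite 2 [← hsum_flip]
      rw [← Finset.sum_add_distrib]
      rw [Finset.sum_congr rfl (fun w _ => key w)]
      exact ih hk'
    have hexp : N + N' - k = (N + N' - (k + 1)) + 1 := by omega
    rw [hexp, pow_succ] at h2S
    rw [hm]
    linarith

lemma phi_lb (h b B a a' : ℝ) (hh : 0 < h) (ha1 : b ≤ a) (ha2 : a ≤ B)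
    (hb1 : b ≤ a') (hb2 : a' ≤ B) :
    h * Real.exp (-(h * B)) * (a - a') ^ 2 ≤ (phi (h * a) - phi (h * a')) * (a - a') := by
  have key : ∀ x y : ℝ, y ≤ x → x ≤ B →
      h * Real.exp (-(h * B)) * (x - y) ^ 2 ≤ (phi (h * x) - phi (h * y)) * (x - y) := by
    intro x y hyx hxB
    have eadd : Real.exp (-(h * x)) * Real.exp (h * (x - y)) = Real.exp (-(h * y)) := by
      rw [← Real.exp_add]; ring_nf
    have e1 : phi (h * x) - phi (h * y)
        = Real.exp (-(h * x)) * (Real.exp (h * (x - y)) - 1) := by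
      simp only [phi]
      rw [mul_sub, eadd]
      ring
    have e2 : h * (x - y) ≤ Real.exp (h * (x - y)) - 1 := by
      linarith [Real.add_one_le_exp (h * (x - y))]
    have e3 : Real.exp (-(h * B)) ≤ Real.exp (-(h * x)) :=
      Real.exp_le_exp.mpr (by nlinarith)
    have h4 : 0 ≤ x - y := by linarith
    calc h * Real.exp (-(h * B)) * (x - y) ^ 2
        ≤ Real.exp (-(h * x)) * (h * (x - y)) * (x - y) := by
          nlinarith [mul_le_mul_of_nonneg_right (mul_le_mul_of_nonneg_left e3 hh.le) (sq_nonneg (x - y))]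
      _ ≤ Real.exp (-(h * x)) * (Real.exp (h * (x - y)) - 1) * (x - y) := by
          nlinarith [mul_le_mul_of_nonneg_right (mul_le_mul_of_nonneg_left e2 (Real.exp_pos (-(h * x))).le) h4]
      _ = (phi (h * x) - phi (h * y)) * (x - y) := by rw [e1]
  rcases le_total a' a with hc | hc
  · exact key a a' hc ha2
  · have hk := key a' a hc hb2
    have hid : (phi (h * a') - phi (h * a)) * (a' - a)
        = (phi (h * a) - phi (h * a')) * (a - a') := by ring
    have hsq : (a' - a) ^ 2 = (a - a') ^ 2 := by ring
    rw [hid, hsq] at hk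
    exact hk

lemma sq_ge (N' : ℕ) (t : ℤ) (y : ℤ → Bool) (v : Fin N' → ℝ) :
    ∑ l : Fin N', (v l) ^ 2 * ∏ s ∈ Finset.Icc (t - (N' : ℤ)) (t - 1),
        (if y s = decide (s = t - ((l : ℕ) + 1 : ℕ)) then (1 : ℝ) else 0)
      ≤ (∑ l : Fin N', bval (y (t - ((l : ℕ) + 1 : ℕ))) * v l) ^ 2 := by
  have hmem : ∀ l : Fin N', t - ((l : ℕ) + 1 : ℕ) ∈ Finset.Icc (t - (N' : ℤ)) (t - 1) := by
    intro l
    simp only [Finset.mem_Icc]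
    have := l.2
    push_cast
    omega
  have hinj : ∀ l l' : Fin N',
      (t - ((l : ℕ) + 1 : ℕ) : ℤ) = t - ((l' : ℕ) + 1 : ℕ) ↔ l = l' := by
    intro l l'
    constructor
    · intro hE
      have : ((l : ℕ) : ℤ) = ((l' : ℕ) : ℤ) := by push_cast at hE; omega
      exact Fin.ext (by exact_mod_cast this)
    · rintro rfl; rfl
  by_cases hex : ∃ l₀ : Fin N', ∀ s ∈ Finset.Icc (t - (N' : ℤ)) (t - 1),
      y s = decide (s = t - ((l₀ : ℕ) + 1 : ℕ))
  · obtain ⟨l₀, hl₀⟩ := hex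
    have hyval : ∀ l : Fin N',
        y (t - ((l : ℕ) + 1 : ℕ)) = decide ((t - ((l : ℕ) + 1 : ℕ) : ℤ) = t - ((l₀ : ℕ) + 1 : ℕ)) :=
      fun l => hl₀ _ (hmem l)
    have hsum : ∑ l : Fin N', bval (y (t - ((l : ℕ) + 1 : ℕ))) * v l = v l₀ := by
      rw [Finset.sum_eq_single l₀]
      · rw [hyval l₀]
        simp [bval]
      · intro l _ hne
        have hne' : ¬ (((l : ℕ) : ℤ) = ((l₀ : ℕ) : ℤ)) := by
          intro hE
          exact hne (Fin.ext (by exact_mod_cast hE))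
        rw [hyval l]
        simp [bval, hne']
      · intro hcon; exact absurd (Finset.mem_univ l₀) hcon
    have hsum2 : ∑ l : Fin N', (v l) ^ 2 * ∏ s ∈ Finset.Icc (t - (N' : ℤ)) (t - 1),
        (if y s = decide (s = t - ((l : ℕ) + 1 : ℕ)) then (1 : ℝ) else 0) = (v l₀) ^ 2 := by
      rw [Finset.sum_eq_single l₀]
      · have hone : ∏ s ∈ Finset.Icc (t - (N' : ℤ)) (t - 1),
            (if y s = decide (s = t - ((l₀ : ℕ) + 1 : ℕ)) then (1 : ℝ) else 0) = 1 :=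
          Finset.prod_eq_one (fun s hs => by rw [hl₀ s hs]; simp)
        rw [hone, mul_one]
      · intro l _ hne
        have hzero : ∏ s ∈ Finset.Icc (t - (N' : ℤ)) (t - 1),
            (if y s = decide (s = t - ((l : ℕ) + 1 : ℕ)) then (1 : ℝ) else 0) = 0 := by
          apply Finset.prod_eq_zero (hmem l)
          have hne' : ¬ (((l : ℕ) : ℤ) = ((l₀ : ℕ) : ℤ)) := by
            intro hE
            exact hne (Fin.ext (by exact_mod_cast hE))
          rw [hyval l]
          simp [hne']
        rw [hzero, mul_zero]
      · intro hcon; exact absurd (Finset.mem_univ l₀) hcon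
    rw [hsum, hsum2]
  · push_neg at hex
    refine le_trans (le_of_eq (Finset.sum_eq_zero fun l _ => ?_)) (sq_nonneg _)
    obtain ⟨s, hs, hys⟩ := hex l
    rw [Finset.prod_eq_zero hs (if_neg hys : (if y s = decide (s = t - ((l : ℕ) + 1 : ℕ)) then (1 : ℝ) else 0) = 0), mul_zero]

lemma event_prob (N N' : ℕ) (h : ℝ) (hh : 0 < h) (Λ : ℤ → (ℤ → Bool) → ℝ)
    (hdep : ∀ (t : ℤ) (y y' : ℤ → Bool),
      (∀ i ∈ window N N', i < t → y i = y' i) → Λ t y = Λ t y')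
    (b B : ℝ) (hb : 0 < b)
    (hstar : ∀ t ∈ window N N', ∀ y : ℤ → Bool,
      0 < seqPMF N N' h Λ y → b ≤ Λ t y ∧ Λ t y ≤ B)
    (t : ℤ) (ht : t ∈ Finset.Icc (1 : ℤ) (N : ℤ)) (l : Fin N') :
    (1 - Real.exp (-(h * b))) * Real.exp (-(h * B)) ^ (N' - 1)
      ≤ ∑ w : ↥(window N N') → Bool, seqPMF N N' h Λ (extSeq N N' w)
          * ∏ s ∈ Finset.Icc (t - (N' : ℤ)) (t - 1),
              (if extSeq N N' w s = decide (s = t - ((l : ℕ) + 1 : ℕ)) then (1 : ℝ) else 0) := by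
  have LB := lam_bounds N N' h hh Λ hdep b B hb hstar
  have ht' := Finset.mem_Icc.mp ht
  set S : Finset ℤ := Finset.Icc (t - (N' : ℤ)) (t - 1) with hS
  set s₁ : ℤ := t - ((l : ℕ) + 1 : ℕ) with hs₁
  have hlval : ((l : ℕ) : ℤ) < (N' : ℤ) := by exact_mod_cast l.2
  have hs₁S : s₁ ∈ S := by
    rw [hS, hs₁, Finset.mem_Icc]
    push_cast
    omega
  have hSw : S ⊆ window N N' := by
    intro s hs
    rw [hS, Finset.mem_Icc] at hs
    rw [window, Finset.mem_Icc]
    omega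
  -- the hybrid factor family
  set r : ℤ → (ℤ → Bool) → ℝ := fun s y =>
    if s ∈ S then (if y s = decide (s = s₁) then (1 : ℝ) else 0) else qfac h Λ s y with hr
  have h1 : ∀ s ∈ window N N', ∀ y y' : ℤ → Bool,
      (∀ i ∈ window N N', i ≤ s → y i = y' i) → r s y = r s y' := by
    intro s hs y y' hagree
    by_cases hsS : s ∈ S
    · simp only [hr, if_pos hsS]
      rw [hagree s hs le_rfl]
    · simp only [hr, if_neg hsS, qfac]
      rw [hagree s hs le_rfl, hdep s y y' (fun i hi his => hagree i hi (le_of_lt his))]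
  have h2 : ∀ s ∈ window N N', ∀ y y' : ℤ → Bool,
      (∀ i : ℤ, i ≠ s → y i = y' i) → y s = true → y' s = false → r s y + r s y' = 1 := by
    intro s hs y y' hagree hy hy'
    by_cases hsS : s ∈ S
    · simp only [hr, if_pos hsS, hy, hy']
      by_cases hss : s = s₁ <;> simp [hss]
    · simp only [hr, if_neg hsS]
      have hΛeq : Λ s y = Λ s y' := hdep s y y' (fun i hi his => hagree i (ne_of_lt his))
      rw [qfac_true hy, qfac_false hy', hΛeq]
      ring
  have htel := telescope N N' r h1 h2 (N + N') le_rfl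
  have hwin : Finset.Icc (-(N' : ℤ) + 1) (-(N' : ℤ) + ((N + N' : ℕ) : ℤ)) = window N N' := by
    rw [window]
    congr 1
    push_cast
    ring
  rw [hwin, Nat.sub_self, pow_zero] at htel
  -- pointwise bound
  set mfun : ℤ → ℝ := fun s =>
    if s = s₁ then 1 - Real.exp (-(h * b)) else Real.exp (-(h * B)) with hmfun
  have hcardS : S.card = N' := by
    rw [hS, Int.card_Icc]
    omega
  have hc0 : ∏ s ∈ S, mfun s = (1 - Real.exp (-(h * b))) * Real.exp (-(h * B)) ^ (N' - 1) := by
    rw [← Finset.mul_prod_erase S mfun hs₁S]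
    have h1' : mfun s₁ = 1 - Real.exp (-(h * b)) := by simp [hmfun]
    have h2' : ∏ s ∈ S.erase s₁, mfun s = Real.exp (-(h * B)) ^ (N' - 1) := by
      rw [Finset.prod_congr rfl (fun s hs => ?_), Finset.prod_const]
      · rw [Finset.card_erase_of_mem hs₁S, hcardS]
      · exact if_neg (Finset.ne_of_mem_erase hs)
    rw [h1', h2']
  have hexpb1 : Real.exp (-(h * b)) ≤ 1 := by
    rw [← Real.exp_zero]
    apply Real.exp_le_exp.mpr
    nlinarith
  have hperW : ∀ w : ↥(window N N') → Bool,
      ((1 - Real.exp (-(h * b))) * Real.exp (-(h * B)) ^ (N' - 1))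
          * ∏ s ∈ window N N', r s (extSeq N N' w)
        ≤ seqPMF N N' h Λ (extSeq N N' w)
          * ∏ s ∈ S, (if extSeq N N' w s = decide (s = s₁) then (1 : ℝ) else 0) := by
    intro w
    have hq_pos : ∀ s ∈ window N N', 0 < qfac h Λ s (extSeq N N' w) := by
      intro s hs
      cases hval : extSeq N N' w s with
      | false => rw [qfac_false hval]; exact Real.exp_pos _
      | true =>
        rw [qfac_true hval]
        have hΛ := (LB s hs w).1
        have : Real.exp (-(h * Λ s (extSeq N N' w))) < 1 := by
          rw [← Real.exp_zero]
          apply Real.exp_lt_exp.mpr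
          nlinarith
        linarith
    have hsplit1 : ∏ s ∈ window N N', r s (extSeq N N' w)
        = (∏ s ∈ window N N' \ S, qfac h Λ s (extSeq N N' w))
          * ∏ s ∈ S, (if extSeq N N' w s = decide (s = s₁) then (1 : ℝ) else 0) := by
      rw [← Finset.prod_sdiff hSw]
      congr 1
      · exact Finset.prod_congr rfl (fun s hs => by
          rw [hr]
          exact if_neg (Finset.mem_sdiff.mp hs).2)
      · exact Finset.prod_congr rfl (fun s hs => by rw [hr]; exact if_pos hs)
    have hsplit2 : seqPMF N N' h Λ (extSeq N N' w)
        = (∏ s ∈ window N N' \ S, qfac h Λ s (extSeq N N' w))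
          * ∏ s ∈ S, qfac h Λ s (extSeq N N' w) := by
      rw [seqPMF_eq, ← Finset.prod_sdiff hSw]
    have hQnn : 0 ≤ ∏ s ∈ window N N' \ S, qfac h Λ s (extSeq N N' w) :=
      Finset.prod_nonneg (fun s hs => (hq_pos s (Finset.mem_sdiff.mp hs).1).le)
    have hkey : ((1 - Real.exp (-(h * b))) * Real.exp (-(h * B)) ^ (N' - 1))
        * ∏ s ∈ S, (if extSeq N N' w s = decide (s = s₁) then (1 : ℝ) else 0)
        ≤ ∏ s ∈ S, (qfac h Λ s (extSeq N N' w)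
            * (if extSeq N N' w s = decide (s = s₁) then (1 : ℝ) else 0)) := by
      rw [← hc0, ← Finset.prod_mul_distrib]
      apply Finset.prod_le_prod
      · intro s hs
        apply mul_nonneg
        · rw [hmfun]
          dsimp only
          split
          · linarith
          · exact (Real.exp_pos _).le
        · split <;> norm_num
      · intro s hs
        by_cases hχ : extSeq N N' w s = decide (s = s₁)
        · rw [if_pos hχ, mul_one, mul_one]
          by_cases hss : s = s₁
          · have hvt : extSeq N N' w s = true := by rw [hχ, hss]; simp
            rw [qfac_true hvt]
            have hΛ := (LB s (hSw hs) w).1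
            have : Real.exp (-(h * Λ s (extSeq N N' w))) ≤ Real.exp (-(h * b)) := by
              apply Real.exp_le_exp.mpr
              nlinarith
            rw [hmfun]
            dsimp only
            rw [if_pos hss]
            linarith
          · have hvf : extSeq N N' w s = false := by rw [hχ]; simp [hss]
            rw [qfac_false hvf]
            have hΛ := (LB s (hSw hs) w).2
            rw [hmfun]
            dsimp only
            rw [if_neg hss]
            apply Real.exp_le_exp.mpr
            nlinarith
        · rw [if_neg hχ, mul_zero, mul_zero]
    calc ((1 - Real.exp (-(h * b))) * Real.exp (-(h * B)) ^ (N' - 1))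
          * ∏ s ∈ window N N', r s (extSeq N N' w)
        = (∏ s ∈ window N N' \ S, qfac h Λ s (extSeq N N' w))
          * (((1 - Real.exp (-(h * b))) * Real.exp (-(h * B)) ^ (N' - 1))
            * ∏ s ∈ S, (if extSeq N N' w s = decide (s = s₁) then (1 : ℝ) else 0)) := by
          rw [hsplit1]; ring
      _ ≤ (∏ s ∈ window N N' \ S, qfac h Λ s (extSeq N N' w))
          * ∏ s ∈ S, (qfac h Λ s (extSeq N N' w)
            * (if extSeq N N' w s = decide (s = s₁) then (1 : ℝ) else 0)) :=
          mul_le_mul_of_nonneg_left hkey hQnn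
      _ = seqPMF N N' h Λ (extSeq N N' w)
          * ∏ s ∈ S, (if extSeq N N' w s = decide (s = s₁) then (1 : ℝ) else 0) := by
          rw [hsplit2, Finset.prod_mul_distrib]; ring
  calc (1 - Real.exp (-(h * b))) * Real.exp (-(h * B)) ^ (N' - 1)
      = ((1 - Real.exp (-(h * b))) * Real.exp (-(h * B)) ^ (N' - 1))
        * ∑ w : ↥(window N N') → Bool, ∏ s ∈ window N N', r s (extSeq N N' w) := by
        rw [htel, mul_one]
    _ = ∑ w : ↥(window N N') → Bool,
        ((1 - Real.exp (-(h * b))) * Real.exp (-(h * B)) ^ (N' - 1))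
          * ∏ s ∈ window N N', r s (extSeq N N' w) := Finset.mul_sum _ _ _
    _ ≤ ∑ w : ↥(window N N') → Bool, seqPMF N N' h Λ (extSeq N N' w)
          * ∏ s ∈ S, (if extSeq N N' w s = decide (s = s₁) then (1 : ℝ) else 0) :=
        Finset.sum_le_sum (fun w _ => hperW w)


/-- strong monotonicity of the stationary VI vector field
`G_s(ψ) = E[∑_{t=1}^N (φ(h Λ_t(ψ;y)) - y_t) ξ_t(y)]`. -/
theorem Gs_strongly_monotone
    (N N' : ℕ) (hN : 1 ≤ N) (hN' : 1 ≤ N') (h : ℝ) (hh : 0 < h)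
    (Λ : ℤ → (ℤ → Bool) → ℝ)
    (hdep : ∀ (t : ℤ) (y y' : ℤ → Bool),
      (∀ i ∈ window N N', i < t → y i = y' i) → Λ t y = Λ t y')
    (μ : ℝ) (hμ : 0 < μ)
    (b B : ℝ) (hb : 0 < b) (hbB : b ≤ B)
    (hstar : ∀ t ∈ window N N', ∀ y : ℤ → Bool,
      0 < seqPMF N N' h Λ y → b ≤ Λ t y ∧ Λ t y ≤ B)
    (Θψ : Set (EuclideanSpace ℝ (Fin N'))) (hne : Θψ.Nonempty)
    (hcomp : IsCompact Θψ) (hconv : Convex ℝ Θψ)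
    (ψstar : EuclideanSpace ℝ (Fin N')) (hψs : ψstar ∈ Θψ)
    (htrue : ∀ t ∈ Finset.Icc (1 : ℤ) (N : ℤ), ∀ y : ℤ → Bool,
      Λ t y = statIntensity N' μ ψstar t y)
    (hphys : ∀ ψ ∈ Θψ, ∀ t ∈ Finset.Icc (1 : ℤ) (N : ℤ), ∀ y : ℤ → Bool,
      b ≤ statIntensity N' μ ψ t y ∧ statIntensity N' μ ψ t y ≤ B) :
    ∀ ψ ∈ Θψ, ∀ ψ' ∈ Θψ,
      ⟪expectVec N N' h Λ (fun y => ∑ t ∈ Finset.Icc (1 : ℤ) (N : ℤ),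
            (phi (h * statIntensity N' μ ψ t y) - bval (y t)) • xi N' t y)
        - expectVec N N' h Λ (fun y => ∑ t ∈ Finset.Icc (1 : ℤ) (N : ℤ),
            (phi (h * statIntensity N' μ ψ' t y) - bval (y t)) • xi N' t y),
        ψ - ψ'⟫
        ≥ (Real.exp (-(h * b)) * b * ((N : ℝ) * h) * h
            * Real.exp (-(B * ((N' : ℝ) * h)))) * ‖ψ - ψ'‖ ^ 2 := by
  intro ψ hψ ψ' hψ'
  have LB := lam_bounds N N' h hh Λ hdep b B hb hstar
  have hp0 : ∀ w : ↥(window N N') → Bool, 0 ≤ seqPMF N N' h Λ (extSeq N N' w) := by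
    intro w
    rw [seqPMF_eq]
    apply Finset.prod_nonneg
    intro u hu
    cases hval : extSeq N N' w u with
    | false => rw [qfac_false hval]; exact (Real.exp_pos _).le
    | true =>
      rw [qfac_true hval]
      have hΛ := (LB u hu w).1
      have : Real.exp (-(h * Λ u (extSeq N N' w))) ≤ 1 := by
        rw [← Real.exp_zero]
        apply Real.exp_le_exp.mpr
        nlinarith
      linarith
  have hinner_eq : ∀ (t : ℤ) (y : ℤ → Bool),
      ⟪xi N' t y, ψ - ψ'⟫
        = ∑ l : Fin N', bval (y (t - ((l : ℕ) + 1 : ℕ))) * (ψ l - ψ' l) := by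
    intro t y
    rw [PiLp.inner_apply]
    apply Finset.sum_congr rfl
    intro l _
    rw [RCLike.inner_apply, starRingEnd_apply, star_trivial]
    rw [mul_comm]; rfl
  have hstat : ∀ (t : ℤ) (y : ℤ → Bool),
      statIntensity N' μ ψ t y - statIntensity N' μ ψ' t y
        = ∑ l : Fin N', bval (y (t - ((l : ℕ) + 1 : ℕ))) * (ψ l - ψ' l) := by
    intro t y
    simp only [statIntensity, xi, WithLp.ofLp_toLp, mul_sub, Finset.sum_sub_distrib]
    ring
  have hDiff : ∀ (t : ℤ) (y : ℤ → Bool),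
      ⟪xi N' t y, ψ - ψ'⟫ = statIntensity N' μ ψ t y - statIntensity N' μ ψ' t y :=
    fun t y => (hinner_eq t y).trans (hstat t y).symm
  have hstep1 : ⟪expectVec N N' h Λ (fun y => ∑ t ∈ Finset.Icc (1 : ℤ) (N : ℤ),
            (phi (h * statIntensity N' μ ψ t y) - bval (y t)) • xi N' t y)
        - expectVec N N' h Λ (fun y => ∑ t ∈ Finset.Icc (1 : ℤ) (N : ℤ),
            (phi (h * statIntensity N' μ ψ' t y) - bval (y t)) • xi N' t y),
        ψ - ψ'⟫
      = ∑ w : ↥(window N N') → Bool, seqPMF N N' h Λ (extSeq N N' w)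
          * ∑ t ∈ Finset.Icc (1 : ℤ) (N : ℤ),
            (phi (h * statIntensity N' μ ψ t (extSeq N N' w))
              - phi (h * statIntensity N' μ ψ' t (extSeq N N' w)))
            * (statIntensity N' μ ψ t (extSeq N N' w)
              - statIntensity N' μ ψ' t (extSeq N N' w)) := by
    rw [inner_sub_left, expectVec, expectVec, sum_inner, sum_inner, ← Finset.sum_sub_distrib]
    apply Finset.sum_congr rfl
    intro w _
    rw [real_inner_smul_left, real_inner_smul_left, ← mul_sub]
    congr 1
    rw [sum_inner, sum_inner, ← Finset.sum_sub_distrib]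
    apply Finset.sum_congr rfl
    intro t _
    rw [real_inner_smul_left, real_inner_smul_left, ← sub_mul, hDiff]
    ring
  have hnorm : ‖ψ - ψ'‖ ^ 2 = ∑ l : Fin N', (ψ l - ψ' l) ^ 2 := by
    rw [EuclideanSpace.norm_eq, Real.sq_sqrt (Finset.sum_nonneg (fun l _ => sq_nonneg _))]
    apply Finset.sum_congr rfl
    intro l _
    rw [show (ψ - ψ') l = ψ l - ψ' l from rfl, Real.norm_eq_abs, sq_abs]
  have hmid : ∀ w : ↥(window N N') → Bool,
      (h * Real.exp (-(h * B))) * ∑ t ∈ Finset.Icc (1 : ℤ) (N : ℤ),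
          (statIntensity N' μ ψ t (extSeq N N' w) - statIntensity N' μ ψ' t (extSeq N N' w)) ^ 2
        ≤ ∑ t ∈ Finset.Icc (1 : ℤ) (N : ℤ),
            (phi (h * statIntensity N' μ ψ t (extSeq N N' w))
              - phi (h * statIntensity N' μ ψ' t (extSeq N N' w)))
            * (statIntensity N' μ ψ t (extSeq N N' w)
              - statIntensity N' μ ψ' t (extSeq N N' w)) := by
    intro w
    rw [Finset.mul_sum]
    apply Finset.sum_le_sum
    intro t ht
    exact phi_lb h b B _ _ hh (hphys ψ hψ t ht _).1 (hphys ψ hψ t ht _).2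
      (hphys ψ' hψ' t ht _).1 (hphys ψ' hψ' t ht _).2
  have hperT : ∀ t ∈ Finset.Icc (1 : ℤ) (N : ℤ),
      ((1 - Real.exp (-(h * b))) * Real.exp (-(h * B)) ^ (N' - 1))
          * ∑ l : Fin N', (ψ l - ψ' l) ^ 2
        ≤ ∑ w : ↥(window N N') → Bool, seqPMF N N' h Λ (extSeq N N' w)
            * (statIntensity N' μ ψ t (extSeq N N' w)
              - statIntensity N' μ ψ' t (extSeq N N' w)) ^ 2 := by
    intro t ht
    have step1 : ((1 - Real.exp (-(h * b))) * Real.exp (-(h * B)) ^ (N' - 1))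
          * ∑ l : Fin N', (ψ l - ψ' l) ^ 2
        ≤ ∑ l : Fin N', (ψ l - ψ' l) ^ 2
            * (∑ w : ↥(window N N') → Bool, seqPMF N N' h Λ (extSeq N N' w)
              * ∏ s ∈ Finset.Icc (t - (N' : ℤ)) (t - 1),
                (if extSeq N N' w s = decide (s = t - ((l : ℕ) + 1 : ℕ)) then (1 : ℝ) else 0)) := by
      rw [Finset.mul_sum]
      apply Finset.sum_le_sum
      intro l _
      calc ((1 - Real.exp (-(h * b))) * Real.exp (-(h * B)) ^ (N' - 1)) * (ψ l - ψ' l) ^ 2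
          = (ψ l - ψ' l) ^ 2 * ((1 - Real.exp (-(h * b))) * Real.exp (-(h * B)) ^ (N' - 1)) := by
            ring
        _ ≤ _ := mul_le_mul_of_nonneg_left
            (event_prob N N' h hh Λ hdep b B hb hstar t ht l) (sq_nonneg _)
    have step2 : ∑ l : Fin N', (ψ l - ψ' l) ^ 2
            * (∑ w : ↥(window N N') → Bool, seqPMF N N' h Λ (extSeq N N' w)
              * ∏ s ∈ Finset.Icc (t - (N' : ℤ)) (t - 1),
                (if extSeq N N' w s = decide (s = t - ((l : ℕ) + 1 : ℕ)) then (1 : ℝ) else 0))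
        = ∑ w : ↥(window N N') → Bool, seqPMF N N' h Λ (extSeq N N' w)
            * ∑ l : Fin N', (ψ l - ψ' l) ^ 2
              * ∏ s ∈ Finset.Icc (t - (N' : ℤ)) (t - 1),
                (if extSeq N N' w s = decide (s = t - ((l : ℕ) + 1 : ℕ)) then (1 : ℝ) else 0) := by
      simp_rw [Finset.mul_sum]
      rw [Finset.sum_comm]
      apply Finset.sum_congr rfl
      intro w _
      apply Finset.sum_congr rfl
      intro l _
      ring
    have step3 : ∑ w : ↥(window N N') → Bool, seqPMF N N' h Λ (extSeq N N' w)
            * ∑ l : Fin N', (ψ l - ψ' l) ^ 2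
              * ∏ s ∈ Finset.Icc (t - (N' : ℤ)) (t - 1),
                (if extSeq N N' w s = decide (s = t - ((l : ℕ) + 1 : ℕ)) then (1 : ℝ) else 0)
        ≤ ∑ w : ↥(window N N') → Bool, seqPMF N N' h Λ (extSeq N N' w)
            * (statIntensity N' μ ψ t (extSeq N N' w)
              - statIntensity N' μ ψ' t (extSeq N N' w)) ^ 2 := by
      apply Finset.sum_le_sum
      intro w _
      apply mul_le_mul_of_nonneg_left _ (hp0 w)
      rw [hstat t (extSeq N N' w)]
      exact sq_ge N' t (extSeq N N' w) (fun l => ψ l - ψ' l)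
    calc ((1 - Real.exp (-(h * b))) * Real.exp (-(h * B)) ^ (N' - 1))
          * ∑ l : Fin N', (ψ l - ψ' l) ^ 2
        ≤ _ := step1
      _ = _ := step2
      _ ≤ _ := step3
  have hconst : Real.exp (-(h * b)) * b * ((N : ℝ) * h) * h * Real.exp (-(B * ((N' : ℝ) * h)))
      ≤ (h * Real.exp (-(h * B)))
        * ((N : ℝ) * ((1 - Real.exp (-(h * b))) * Real.exp (-(h * B)) ^ (N' - 1))) := by
    have hpow : Real.exp (-(h * B)) * Real.exp (-(h * B)) ^ (N' - 1)
        = Real.exp (-(B * ((N' : ℝ) * h))) := by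
      rw [← pow_succ']
      rw [show N' - 1 + 1 = N' from by omega]
      rw [← Real.exp_nat_mul]
      congr 1
      ring
    have hkey : h * b * Real.exp (-(h * b)) ≤ 1 - Real.exp (-(h * b)) := by
      have e1 := Real.add_one_le_exp (h * b)
      have e2 : Real.exp (h * b) * Real.exp (-(h * b)) = 1 := by
        rw [← Real.exp_add]; simp
      nlinarith [Real.exp_pos (-(h * b))]
    calc Real.exp (-(h * b)) * b * ((N : ℝ) * h) * h * Real.exp (-(B * ((N' : ℝ) * h)))
        = (h * b * Real.exp (-(h * b)))
          * ((N : ℝ) * h * Real.exp (-(B * ((N' : ℝ) * h)))) := by ring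
      _ ≤ (1 - Real.exp (-(h * b)))
          * ((N : ℝ) * h * Real.exp (-(B * ((N' : ℝ) * h)))) := by
          apply mul_le_mul_of_nonneg_right hkey
          positivity
      _ = (h * Real.exp (-(h * B)))
          * ((N : ℝ) * ((1 - Real.exp (-(h * b))) * Real.exp (-(h * B)) ^ (N' - 1))) := by
          rw [← hpow]
          ring
  rw [ge_iff_le, hstep1, hnorm]
  have hVnn : (0:ℝ) ≤ ∑ l : Fin N', (ψ l - ψ' l) ^ 2 :=
    Finset.sum_nonneg (fun l _ => sq_nonneg _)
  calc Real.exp (-(h * b)) * b * ((N : ℝ) * h) * h * Real.exp (-(B * ((N' : ℝ) * h)))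
        * ∑ l : Fin N', (ψ l - ψ' l) ^ 2
      ≤ ((h * Real.exp (-(h * B)))
          * ((N : ℝ) * ((1 - Real.exp (-(h * b))) * Real.exp (-(h * B)) ^ (N' - 1))))
        * ∑ l : Fin N', (ψ l - ψ' l) ^ 2 := mul_le_mul_of_nonneg_right hconst hVnn
    _ = (h * Real.exp (-(h * B))) * ∑ t ∈ Finset.Icc (1 : ℤ) (N : ℤ),
          ((1 - Real.exp (-(h * b))) * Real.exp (-(h * B)) ^ (N' - 1))
            * ∑ l : Fin N', (ψ l - ψ' l) ^ 2 := by
        rw [Finset.sum_const, Int.card_Icc, show ((N : ℤ) + 1 - 1).toNat = N from by omega,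
          nsmul_eq_mul]
        ring
    _ ≤ (h * Real.exp (-(h * B))) * ∑ t ∈ Finset.Icc (1 : ℤ) (N : ℤ),
          ∑ w : ↥(window N N') → Bool, seqPMF N N' h Λ (extSeq N N' w)
            * (statIntensity N' μ ψ t (extSeq N N' w)
              - statIntensity N' μ ψ' t (extSeq N N' w)) ^ 2 := by
        apply mul_le_mul_of_nonneg_left (Finset.sum_le_sum hperT)
        positivity
    _ = ∑ w : ↥(window N N') → Bool, seqPMF N N' h Λ (extSeq N N' w)
          * ((h * Real.exp (-(h * B))) * ∑ t ∈ Finset.Icc (1 : ℤ) (N : ℤ),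
            (statIntensity N' μ ψ t (extSeq N N' w)
              - statIntensity N' μ ψ' t (extSeq N N' w)) ^ 2) := by
        simp_rw [Finset.mul_sum]
        rw [Finset.sum_comm]
        apply Finset.sum_congr rfl
        intro w _
        apply Finset.sum_congr rfl
        intro t _
        ring
    _ ≤ ∑ w : ↥(window N N') → Bool, seqPMF N N' h Λ (extSeq N N' w)
          * ∑ t ∈ Finset.Icc (1 : ℤ) (N : ℤ),
            (phi (h * statIntensity N' μ ψ t (extSeq N N' w))
              - phi (h * statIntensity N' μ ψ' t (extSeq N N' w)))
            * (statIntensity N' μ ψ t (extSeq N N' w)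
              - statIntensity N' μ ψ' t (extSeq N N' w)) :=
        Finset.sum_le_sum (fun w _ => mul_le_mul_of_nonneg_left (hmid w) (hp0 w))
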